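/- arXiv:2308.09131 — 2 statements merged into one kernel-verified Lean document; each statement's English description precedes it below -/
import Mathlib

section
/- Let f_S be an n×n complex matrix. The following are equivalent: (a) there exist frame orientations g_i, g_j ∈ G and unitaries Y on ℂ^G, Z on ℂ^n such that 𝐔^{g_i,g_j} (1_G ⊗ f_S) (𝐔^{g_i,g_j})† = (Y ⊗ Z)† (1_G ⊗ f_S) (Y ⊗ Z); (b) f_S commutes with U_S(g) for all g ∈ G. Moreover, when (b) holds, then for all orientations g_i, g_j ∈ G one has exact invariance 𝐔^{g_i,g_j} (1_G ⊗ f_S) (𝐔^{g_i,g_j})† = 1_G ⊗ f_S, and for every bilocal unitary X = Y ⊗ Z the membership 1_G ⊗ f_S ∈ 𝒜^X holds if and only if Z commutes with f_S (with Y arbitrary). -/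
open Matrix Kronecker

variable {G : Type*} [Fintype G] [CommGroup G] [DecidableEq G] {n : ℕ}

/-- The QRF-transformation unitary `𝐔^{g_i,g_j} = Σ_g |g g_i⟩⟨g_j g⁻¹| ⊗ U_S(g)`. -/
noncomputable def Uqrf (U : G →* Matrix.unitaryGroup (Fin n) ℂ) (gi gj : G) :
    Matrix (G × Fin n) (G × Fin n) ℂ :=
  ∑ g : G, Matrix.single (g * gi) (gj * g⁻¹) (1 : ℂ) ⊗ₖ
    (U g : Matrix (Fin n) (Fin n) ℂ)

lemma kron_conjT (A : Matrix G G ℂ) (B : Matrix (Fin n) (Fin n) ℂ) :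
    (A ⊗ₖ B)ᴴ = Aᴴ ⊗ₖ Bᴴ := by
  ext ⟨a, r⟩ ⟨b, s⟩
  simp [Matrix.conjTranspose_apply, Matrix.kroneckerMap_apply, mul_comm]

lemma stdBasis_conjT (i j : G) :
    (Matrix.single i j (1 : ℂ))ᴴ = Matrix.single j i (1 : ℂ) := by
  ext a b
  simp [Matrix.conjTranspose_apply, Matrix.single, and_comm]

lemma Uqrf_conj (U : G →* Matrix.unitaryGroup (Fin n) ℂ) (gi gj : G)
    (f : Matrix (Fin n) (Fin n) ℂ) :
    Uqrf U gi gj * ((1 : Matrix G G ℂ) ⊗ₖ f) * (Uqrf U gi gj)ᴴ =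
      ∑ g : G, Matrix.single (g * gi) (g * gi) (1 : ℂ) ⊗ₖ
        ((U g : Matrix (Fin n) (Fin n) ℂ) * f * (U g : Matrix (Fin n) (Fin n) ℂ)ᴴ) := by
  unfold Uqrf
  rw [Matrix.conjTranspose_sum, Finset.sum_mul, Finset.sum_mul]
  refine Finset.sum_congr rfl fun g _ => ?_
  rw [Finset.mul_sum]
  rw [Finset.sum_eq_single g]
  · rw [kron_conjT, stdBasis_conjT, ← Matrix.mul_kronecker_mul, ← Matrix.mul_kronecker_mul,
      Matrix.mul_one, Matrix.single_mul_single_same, mul_one]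
  · intro h _ hne
    have hne2 : gj * g⁻¹ ≠ gj * h⁻¹ := by
      intro hc
      exact hne (inv_injective (mul_left_cancel hc)).symm
    rw [kron_conjT, stdBasis_conjT, ← Matrix.mul_kronecker_mul, ← Matrix.mul_kronecker_mul,
      Matrix.mul_one, Matrix.single_mul_single_of_ne (h := hne2), Matrix.zero_kronecker]
  · simp

lemma blocks_eq (gi : G) (F : G → Matrix (Fin n) (Fin n) ℂ) (N : Matrix (Fin n) (Fin n) ℂ)
    (h : ∑ g : G, Matrix.single (g * gi) (g * gi) (1 : ℂ) ⊗ₖ F g =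
      (1 : Matrix G G ℂ) ⊗ₖ N) (g : G) : F g = N := by
  ext r s
  have h2 := congrFun (congrFun h (g * gi, r)) (g * gi, s)
  rw [Matrix.sum_apply] at h2
  rw [Finset.sum_eq_single g] at h2
  · simpa [Matrix.kroneckerMap_apply, Matrix.one_apply] using h2
  · intro h' _ hne
    have : h' * gi ≠ g * gi := fun hc => hne (mul_right_cancel hc)
    simp only [Matrix.kroneckerMap_apply, mul_eq_zero]
    exact Or.inl (Matrix.single_apply_of_ne _ _ _ _ _ (fun hc => this hc.1))
  · simp

lemma sum_diag_one (gi : G) :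
    ∑ g : G, Matrix.single (g * gi) (g * gi) (1 : ℂ) = (1 : Matrix G G ℂ) := by
  rw [Fintype.sum_bijective (fun g : G => g * gi) (Group.mulRight_bijective gi) _
    (fun a => Matrix.single a a (1 : ℂ)) (fun g => rfl)]
  ext a b
  rw [Matrix.sum_apply]
  by_cases hab : a = b
  · subst hab
    simp [Matrix.single, Matrix.one_apply]
  · have : ∀ x : G, Matrix.single x x (1 : ℂ) a b = 0 := by
      intro x
      by_cases hx : x = a
      · subst hx; simp [Matrix.single, hab]
      · simp [Matrix.single, hx]
    simp [this, Matrix.one_apply, hab]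

lemma sum_kron (A : G → Matrix G G ℂ) (B : Matrix (Fin n) (Fin n) ℂ) :
    (∑ g : G, A g) ⊗ₖ B = ∑ g : G, (A g ⊗ₖ B) := by
  ext ⟨a, r⟩ ⟨b, s⟩
  simp [Matrix.sum_apply, Matrix.kroneckerMap_apply, Finset.sum_mul]

lemma extract_kron (M N : Matrix (Fin n) (Fin n) ℂ)
    (hMN : (1 : Matrix G G ℂ) ⊗ₖ M = (1 : Matrix G G ℂ) ⊗ₖ N) : M = N := by
  refine blocks_eq (1 : G) (fun _ => M) N ?_ 1
  rw [← sum_kron, sum_diag_one, hMN]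

/-- TPS-invariant system operators. An `S`-local operator `1_G ⊗ f_S` is
invariant up to some bilocal unitary under some QRF transformation iff `f_S` is
translation-invariant; in that case it is exactly invariant for all orientations, and it
lies in `𝒜^{Y⊗Z}` iff `Z` commutes with `f_S` (with `Y` arbitrary). -/
theorem S_local_TPS_invariant_iff (hn : 1 ≤ n)
    (U : G →* Matrix.unitaryGroup (Fin n) ℂ) (fS : Matrix (Fin n) (Fin n) ℂ) :
    ((∃ gi gj : G, ∃ Y ∈ Matrix.unitaryGroup G ℂ, ∃ Z ∈ Matrix.unitaryGroup (Fin n) ℂ,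
        Uqrf U gi gj * ((1 : Matrix G G ℂ) ⊗ₖ fS) * (Uqrf U gi gj)ᴴ =
          (Y ⊗ₖ Z)ᴴ * ((1 : Matrix G G ℂ) ⊗ₖ fS) * (Y ⊗ₖ Z)) ↔
      (∀ g : G, fS * (U g : Matrix (Fin n) (Fin n) ℂ) =
          (U g : Matrix (Fin n) (Fin n) ℂ) * fS)) ∧
    ((∀ g : G, fS * (U g : Matrix (Fin n) (Fin n) ℂ) =
          (U g : Matrix (Fin n) (Fin n) ℂ) * fS) →
      (∀ gi gj : G,
        Uqrf U gi gj * ((1 : Matrix G G ℂ) ⊗ₖ fS) * (Uqrf U gi gj)ᴴ =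
          (1 : Matrix G G ℂ) ⊗ₖ fS) ∧
      (∀ gi gj : G, ∀ Y ∈ Matrix.unitaryGroup G ℂ, ∀ Z ∈ Matrix.unitaryGroup (Fin n) ℂ,
        (Uqrf U gi gj * ((1 : Matrix G G ℂ) ⊗ₖ fS) * (Uqrf U gi gj)ᴴ =
            (Y ⊗ₖ Z)ᴴ * ((1 : Matrix G G ℂ) ⊗ₖ fS) * (Y ⊗ₖ Z)) ↔
          Z * fS = fS * Z)) := by
  have hUU : ∀ g : G, (U g : Matrix (Fin n) (Fin n) ℂ) * (U g : Matrix (Fin n) (Fin n) ℂ)ᴴ = 1 :=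
    fun g => by simpa [Matrix.star_eq_conjTranspose] using (U g).2.2
  have hUU' : ∀ g : G, (U g : Matrix (Fin n) (Fin n) ℂ)ᴴ * (U g : Matrix (Fin n) (Fin n) ℂ) = 1 :=
    fun g => by simpa [Matrix.star_eq_conjTranspose] using (U g).2.1
  -- RHS simplification for bilocal unitaries
  have hRHS : ∀ Y : Matrix G G ℂ, Yᴴ * Y = 1 → ∀ Z : Matrix (Fin n) (Fin n) ℂ,
      (Y ⊗ₖ Z)ᴴ * ((1 : Matrix G G ℂ) ⊗ₖ fS) * (Y ⊗ₖ Z) =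
        (1 : Matrix G G ℂ) ⊗ₖ (Zᴴ * fS * Z) := by
    intro Y hY Z
    rw [kron_conjT, ← Matrix.mul_kronecker_mul, ← Matrix.mul_kronecker_mul,
      Matrix.mul_one, hY]
  -- exact invariance under (b)
  have hexact : (∀ g : G, fS * (U g : Matrix (Fin n) (Fin n) ℂ) =
      (U g : Matrix (Fin n) (Fin n) ℂ) * fS) → ∀ gi gj : G,
      Uqrf U gi gj * ((1 : Matrix G G ℂ) ⊗ₖ fS) * (Uqrf U gi gj)ᴴ =
        (1 : Matrix G G ℂ) ⊗ₖ fS := by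
    intro hcomm gi gj
    rw [Uqrf_conj]
    have hconj : ∀ g : G, (U g : Matrix (Fin n) (Fin n) ℂ) * fS *
        (U g : Matrix (Fin n) (Fin n) ℂ)ᴴ = fS := by
      intro g
      rw [← hcomm g, Matrix.mul_assoc, hUU g, Matrix.mul_one]
    calc ∑ g : G, Matrix.single (g * gi) (g * gi) (1 : ℂ) ⊗ₖ
          ((U g : Matrix (Fin n) (Fin n) ℂ) * fS * (U g : Matrix (Fin n) (Fin n) ℂ)ᴴ)
        = ∑ g : G, Matrix.single (g * gi) (g * gi) (1 : ℂ) ⊗ₖ fS := by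
          exact Finset.sum_congr rfl fun g _ => by rw [hconj g]
      _ = (1 : Matrix G G ℂ) ⊗ₖ fS := by rw [← sum_kron, sum_diag_one]
  refine ⟨⟨?_, ?_⟩, ?_⟩
  · rintro ⟨gi, gj, Y, hY, Z, hZ, heq⟩
    have hYY : Yᴴ * Y = 1 := by simpa [Matrix.star_eq_conjTranspose] using hY.1
    rw [Uqrf_conj, hRHS Y hYY Z] at heq
    have hblk := blocks_eq gi _ _ heq
    have h1 : fS = Zᴴ * fS * Z := by
      have := hblk 1
      simpa using this
    intro g
    have hg := hblk g
    rw [← h1] at hg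
    calc fS * (U g : Matrix (Fin n) (Fin n) ℂ)
        = ((U g : Matrix (Fin n) (Fin n) ℂ) * fS * (U g : Matrix (Fin n) (Fin n) ℂ)ᴴ) *
            (U g : Matrix (Fin n) (Fin n) ℂ) := by rw [hg]
      _ = (U g : Matrix (Fin n) (Fin n) ℂ) * fS := by
          rw [Matrix.mul_assoc, Matrix.mul_assoc, hUU' g, Matrix.mul_one]
  · intro hcomm
    exact ⟨1, 1, 1, one_mem _, 1, one_mem _, by
      rw [hexact hcomm 1 1, hRHS 1 (by simp) 1]
      simp⟩
  · intro hcomm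
    refine ⟨hexact hcomm, ?_⟩
    intro gi gj Y hY Z hZ
    have hYY : Yᴴ * Y = 1 := by simpa [Matrix.star_eq_conjTranspose] using hY.1
    have hZZ' : Zᴴ * Z = 1 := by simpa [Matrix.star_eq_conjTranspose] using hZ.1
    have hZZ : Z * Zᴴ = 1 := by simpa [Matrix.star_eq_conjTranspose] using hZ.2
    rw [hexact hcomm gi gj, hRHS Y hYY Z]
    constructor
    · intro h
      have hf : fS = Zᴴ * fS * Z := extract_kron _ _ h
      calc Z * fS = Z * (Zᴴ * fS * Z) := by rw [← hf]
        _ = (Z * Zᴴ) * fS * Z := by noncomm_ring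
        _ = fS * Z := by rw [hZZ, Matrix.one_mul]
    · intro h
      have : Zᴴ * fS * Z = fS := by
        rw [Matrix.mul_assoc, ← h, ← Matrix.mul_assoc, hZZ', Matrix.one_mul]
      rw [this]
end

section
/- If there exists h ∈ G such that U_S(h) is not a complex scalar multiple of the identity 1_n, then for any frame orientations g_i, g_j ∈ G the QRF-transformation unitary 𝐔 = 𝐔^{g_i,g_j} is not a Kronecker product of local unitaries: there exist no unitaries Y on ℂ^G and Z on ℂ^n with 𝐔 = Y ⊗ Z. (This expresses the inequivalence of the tensor product structures associated with the two quantum reference frames.) -/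
open Matrix Kronecker

variable {G : Type*} [Fintype G] [CommGroup G] [DecidableEq G] {n : ℕ}

lemma Uqrf_apply (U : G →* Matrix.unitaryGroup (Fin n) ℂ) (gi gj : G)
    (a : G) (p q : Fin n) :
    Uqrf U gi gj (a, p) (gj * (a * gi⁻¹)⁻¹, q)
      = (U (a * gi⁻¹) : Matrix (Fin n) (Fin n) ℂ) p q := by
  unfold Uqrf
  rw [Matrix.sum_apply]
  rw [Finset.sum_eq_single (a * gi⁻¹)]
  · simp [Matrix.kroneckerMap_apply, Matrix.single_apply_same]
  · intro g _ hg
    have hne : g * gi ≠ a := by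
      intro he; apply hg; rw [← he]; group
    simp [Matrix.kroneckerMap_apply, Matrix.single, hne]
  · intro hmem; exact absurd (Finset.mem_univ _) hmem

/-- inequivalence of the natural TPSs of the two QRF perspectives.
If some translation `U_S(h)` is not a scalar multiple of the identity, then the
QRF-change unitary `𝐔^{g_i,g_j}` is not a Kronecker product of local unitaries. -/
theorem Uqrf_not_bilocal (hn : 1 ≤ n)
    (U : G →* Matrix.unitaryGroup (Fin n) ℂ)
    (hU : ∃ h : G,
      ¬ ∃ c : ℂ, (U h : Matrix (Fin n) (Fin n) ℂ) = c • (1 : Matrix (Fin n) (Fin n) ℂ)) :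
    ∀ gi gj : G,
      ¬ ∃ Y ∈ Matrix.unitaryGroup G ℂ, ∃ Z ∈ Matrix.unitaryGroup (Fin n) ℂ,
        Uqrf U gi gj = Y ⊗ₖ Z := by
  obtain ⟨h, hh⟩ := hU
  rintro gi gj ⟨Y, hY, Z, hZ, hYZ⟩
  have key : ∀ (a : G) (p q : Fin n),
      (U (a * gi⁻¹) : Matrix (Fin n) (Fin n) ℂ) p q
        = Y a (gj * (a * gi⁻¹)⁻¹) * Z p q := by
    intro a p q
    rw [← Uqrf_apply U gi gj a p q, hYZ, Matrix.kroneckerMap_apply]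
  have key1 : ∀ p q : Fin n, (1 : Matrix (Fin n) (Fin n) ℂ) p q = Y gi gj * Z p q := by
    intro p q
    have := key gi p q
    simpa using this
  haveI : NeZero n := ⟨by omega⟩
  have hc : Y gi gj ≠ 0 := by
    intro h0
    have := key1 0 0
    simp [h0, Matrix.one_apply] at this
  apply hh
  refine ⟨Y (h * gi) (gj * h⁻¹) * (Y gi gj)⁻¹, ?_⟩
  ext p q
  have h1 := key (h * gi) p q
  simp only [mul_inv_cancel_right] at h1
  have h2 := key1 p q
  have hZpq : Z p q = (Y gi gj)⁻¹ * (1 : Matrix (Fin n) (Fin n) ℂ) p q := by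
    field_simp [h2]
    rw [h2]; ring
  rw [h1, hZpq]
  simp [Matrix.smul_apply]
  ring
end
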